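/- The single-step Riccati update map P ↦ A(P - P C'(C P C' + R)⁻¹ C P)A' + Q is monotone: P₁ ⪯ P₂ implies the image of P₁ is ⪯ the image of P₂ in the Loewner order. -/
import Mathlib


open Matrix

/-- Key algebraic identity: the difference of one-step Riccati updates is a sum of
two congruence-conjugated PSD matrices. Stated with abstract inverses `F₁ F₂`. -/
lemma riccati_key {n p : ℕ} (C : Matrix (Fin p) (Fin n) ℝ)
    (P₁ P₂ : Matrix (Fin n) (Fin n) ℝ) (D₁ D₂ F₁ F₂ : Matrix (Fin p) (Fin p) ℝ)
    (h1 : F₁ * D₁ = 1) (h1' : D₁ * F₁ = 1) (h2 : F₂ * D₂ = 1) (h2' : D₂ * F₂ = 1)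
    (hD : D₂ = D₁ + C * (P₂ - P₁) * Cᵀ) :
    (P₂ - P₂ * Cᵀ * F₂ * C * P₂) - (P₁ - P₁ * Cᵀ * F₁ * C * P₁)
      = (1 - P₂ * Cᵀ * F₂ * C) * (P₂ - P₁) * (1 - Cᵀ * F₂ * C * P₂)
        + (P₂ * Cᵀ * F₂ - P₁ * Cᵀ * F₁) * D₁ * (F₂ * C * P₂ - F₁ * C * P₁) := by
  have hD' : D₁ = D₂ - C * (P₂ - P₁) * Cᵀ := by rw [hD]; abel
  have g1' : ∀ X : Matrix (Fin p) (Fin n) ℝ, D₁ * (F₁ * X) = X := fun X => by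
    rw [← Matrix.mul_assoc, h1', Matrix.one_mul]
  have g1'' : ∀ X : Matrix (Fin p) (Fin n) ℝ, F₁ * (D₁ * X) = X := fun X => by
    rw [← Matrix.mul_assoc, h1, Matrix.one_mul]
  have g2' : ∀ X : Matrix (Fin p) (Fin n) ℝ, D₂ * (F₂ * X) = X := fun X => by
    rw [← Matrix.mul_assoc, h2', Matrix.one_mul]
  have g2'' : ∀ X : Matrix (Fin p) (Fin n) ℝ, F₂ * (D₂ * X) = X := fun X => by
    rw [← Matrix.mul_assoc, h2, Matrix.one_mul]
  simp only [Matrix.sub_mul, Matrix.mul_sub, Matrix.add_mul, Matrix.mul_add,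
    Matrix.one_mul, Matrix.mul_one, Matrix.mul_assoc, g1', g1'', g2', g2'']
  rw [hD']
  simp only [Matrix.sub_mul, Matrix.mul_sub, Matrix.add_mul, Matrix.mul_add,
    Matrix.one_mul, Matrix.mul_one, Matrix.mul_assoc, g1', g1'', g2', g2'']
  abel

/-- The single-step Riccati update map
`P ↦ A (P - P Cᵀ (C P Cᵀ + R)⁻¹ C P) Aᵀ + Q` is monotone with respect to the
Loewner order on positive semidefinite matrices. -/
theorem riccati_map_monotone {n p : ℕ}
    (A : Matrix (Fin n) (Fin n) ℝ) (C : Matrix (Fin p) (Fin n) ℝ)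
    (Q : Matrix (Fin n) (Fin n) ℝ) (R : Matrix (Fin p) (Fin p) ℝ)
    (hQ : Q.PosSemidef) (hR : R.PosDef)
    (P₁ P₂ : Matrix (Fin n) (Fin n) ℝ)
    (hP₁ : P₁.PosSemidef) (hP₂ : P₂.PosSemidef)
    (hle : (P₂ - P₁).PosSemidef) :
    ((A * (P₂ - P₂ * Cᵀ * (C * P₂ * Cᵀ + R)⁻¹ * C * P₂) * Aᵀ + Q) -
      (A * (P₁ - P₁ * Cᵀ * (C * P₁ * Cᵀ + R)⁻¹ * C * P₁) * Aᵀ + Q)).PosSemidef := by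
  have hD₁ : (C * P₁ * Cᵀ + R).PosDef := by
    have h := hP₁.mul_mul_conjTranspose_same C
    rw [conjTranspose_eq_transpose_of_trivial C] at h
    exact Matrix.PosDef.posSemidef_add h hR
  have hD₂ : (C * P₂ * Cᵀ + R).PosDef := by
    have h := hP₂.mul_mul_conjTranspose_same C
    rw [conjTranspose_eq_transpose_of_trivial C] at h
    exact Matrix.PosDef.posSemidef_add h hR
  set D₁ := C * P₁ * Cᵀ + R with hD₁def
  set D₂ := C * P₂ * Cᵀ + R with hD₂def
  have h1 : D₁⁻¹ * D₁ = 1 := Matrix.nonsing_inv_mul _ hD₁.det_pos.ne'.isUnit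
  have h1' : D₁ * D₁⁻¹ = 1 := Matrix.mul_nonsing_inv _ hD₁.det_pos.ne'.isUnit
  have h2 : D₂⁻¹ * D₂ = 1 := Matrix.nonsing_inv_mul _ hD₂.det_pos.ne'.isUnit
  have h2' : D₂ * D₂⁻¹ = 1 := Matrix.mul_nonsing_inv _ hD₂.det_pos.ne'.isUnit
  have hD : D₂ = D₁ + C * (P₂ - P₁) * Cᵀ := by
    rw [hD₁def, hD₂def]
    simp only [Matrix.mul_sub, Matrix.sub_mul]
    abel
  -- symmetry facts
  have hP₁s : P₁ᵀ = P₁ := by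
    rw [← conjTranspose_eq_transpose_of_trivial P₁]; exact hP₁.1
  have hP₂s : P₂ᵀ = P₂ := by
    rw [← conjTranspose_eq_transpose_of_trivial P₂]; exact hP₂.1
  have hRs : Rᵀ = R := by
    rw [← conjTranspose_eq_transpose_of_trivial R]; exact hR.1
  have hD₁s : D₁ᵀ = D₁ := by
    rw [hD₁def, transpose_add, transpose_mul, transpose_mul, transpose_transpose, hP₁s, hRs,
      Matrix.mul_assoc]
  have hD₂s : D₂ᵀ = D₂ := by
    rw [hD₂def, transpose_add, transpose_mul, transpose_mul, transpose_transpose, hP₂s, hRs,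
      Matrix.mul_assoc]
  have hF₁s : (D₁⁻¹)ᵀ = D₁⁻¹ := by rw [transpose_nonsing_inv, hD₁s]
  have hF₂s : (D₂⁻¹)ᵀ = D₂⁻¹ := by rw [transpose_nonsing_inv, hD₂s]
  -- transpose computations
  have hMt : (1 - P₂ * Cᵀ * D₂⁻¹ * C)ᵀ = 1 - Cᵀ * D₂⁻¹ * C * P₂ := by
    simp only [transpose_sub, transpose_one, transpose_mul, transpose_transpose, hF₂s, hP₂s,
      Matrix.mul_assoc]
  have hEt : (P₂ * Cᵀ * D₂⁻¹ - P₁ * Cᵀ * D₁⁻¹)ᵀ = D₂⁻¹ * C * P₂ - D₁⁻¹ * C * P₁ := by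
    simp only [transpose_sub, transpose_mul, transpose_transpose, hF₁s, hF₂s, hP₁s, hP₂s,
      Matrix.mul_assoc]
  -- key identity
  have key : (P₂ - P₂ * Cᵀ * D₂⁻¹ * C * P₂) - (P₁ - P₁ * Cᵀ * D₁⁻¹ * C * P₁)
      = (1 - P₂ * Cᵀ * D₂⁻¹ * C) * (P₂ - P₁) * (1 - P₂ * Cᵀ * D₂⁻¹ * C)ᵀ
        + (P₂ * Cᵀ * D₂⁻¹ - P₁ * Cᵀ * D₁⁻¹) * D₁ * (P₂ * Cᵀ * D₂⁻¹ - P₁ * Cᵀ * D₁⁻¹)ᵀ := by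
    rw [hMt, hEt]
    have h := riccati_key C P₁ P₂ D₁ D₂ D₁⁻¹ D₂⁻¹ h1 h1' h2 h2' hD
    simp only [Matrix.mul_assoc] at h ⊢
    exact h
  -- PSD of the two summands
  have hS₁ : ((1 - P₂ * Cᵀ * D₂⁻¹ * C) * (P₂ - P₁) * (1 - P₂ * Cᵀ * D₂⁻¹ * C)ᵀ).PosSemidef := by
    rw [← conjTranspose_eq_transpose_of_trivial (1 - P₂ * Cᵀ * D₂⁻¹ * C)]
    exact hle.mul_mul_conjTranspose_same _
  have hS₂ : ((P₂ * Cᵀ * D₂⁻¹ - P₁ * Cᵀ * D₁⁻¹) * D₁ *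
      (P₂ * Cᵀ * D₂⁻¹ - P₁ * Cᵀ * D₁⁻¹)ᵀ).PosSemidef := by
    rw [← conjTranspose_eq_transpose_of_trivial (P₂ * Cᵀ * D₂⁻¹ - P₁ * Cᵀ * D₁⁻¹)]
    exact hD₁.posSemidef.mul_mul_conjTranspose_same _
  have hsum := hS₁.add hS₂
  rw [← key] at hsum
  have hfinal := hsum.mul_mul_conjTranspose_same A
  rw [conjTranspose_eq_transpose_of_trivial A] at hfinal
  have heq : (A * (P₂ - P₂ * Cᵀ * D₂⁻¹ * C * P₂) * Aᵀ + Q) -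
      (A * (P₁ - P₁ * Cᵀ * D₁⁻¹ * C * P₁) * Aᵀ + Q)
      = A * ((P₂ - P₂ * Cᵀ * D₂⁻¹ * C * P₂) - (P₁ - P₁ * Cᵀ * D₁⁻¹ * C * P₁)) * Aᵀ := by
    simp only [Matrix.mul_sub, Matrix.sub_mul, Matrix.mul_assoc]
    abel
  rw [heq]
  exact hfinal
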